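/- Let S and T be multisets of rational numbers such that for every μ ∈ ℚ, card(T^{≥μ}) ≤ card(S^{≥μ}). Then the sum (with multiplicity) of the elements of T^{≥0} is at most the sum of the elements of S^{≥0}. -/
import Mathlib


/-- If for every `μ` the multiset `T` has at most as many elements `≥ μ`
as `S` does, then the sum of the nonnegative elements of `T` (with multiplicity)
is at most the sum of the nonnegative elements of `S`. -/
theorem sum_nonneg_part_mono_of_slopewise_dominance
    (S T : Multiset ℚ)
    (h : ∀ μ : ℚ, (T.filter fun t => μ ≤ t).card ≤ (S.filter fun s => μ ≤ s).card) :
    (T.filter fun t => (0 : ℚ) ≤ t).sum ≤ (S.filter fun s => (0 : ℚ) ≤ s).sum := by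
  induction T using Multiset.strongInductionOn generalizing S with
  | _ T ih =>
    by_cases hT : ∃ t ∈ T, (0:ℚ) ≤ t
    · obtain ⟨t₁, ht₁, ht₁0⟩ := hT
      have hne : T.toFinset.Nonempty := ⟨t₁, Multiset.mem_toFinset.mpr ht₁⟩
      set t₀ := T.toFinset.max' hne with ht₀def
      have ht₀T : t₀ ∈ T := Multiset.mem_toFinset.mp (T.toFinset.max'_mem hne)
      have hmax : ∀ b ∈ T, b ≤ t₀ := fun b hb =>
        T.toFinset.le_max' b (Multiset.mem_toFinset.mpr hb)
      have ht₀0 : (0:ℚ) ≤ t₀ := le_trans ht₁0 (hmax t₁ ht₁)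
      have hpos : 0 < (S.filter fun s => t₀ ≤ s).card :=
        lt_of_lt_of_le (Multiset.card_pos_iff_exists_mem.mpr
          ⟨t₀, Multiset.mem_filter.mpr ⟨ht₀T, le_refl _⟩⟩) (h t₀)
      obtain ⟨s₀, hs₀f⟩ := Multiset.card_pos_iff_exists_mem.mp hpos
      obtain ⟨hs₀S, hs₀t⟩ := Multiset.mem_filter.mp hs₀f
      set T' := T.erase t₀ with hT'
      set S' := S.erase s₀ with hS'
      have hTc : t₀ ::ₘ T' = T := Multiset.cons_erase ht₀T
      have hSc : s₀ ::ₘ S' = S := Multiset.cons_erase hs₀S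
      have h' : ∀ μ : ℚ, (T'.filter fun t => μ ≤ t).card ≤ (S'.filter fun s => μ ≤ s).card := by
        intro μ
        by_cases hμ : μ ≤ t₀
        · have hμs : μ ≤ s₀ := hμ.trans hs₀t
          have e1 := h μ
          rw [← hTc, ← hSc, Multiset.filter_cons_of_pos _ hμ,
            Multiset.filter_cons_of_pos _ hμs, Multiset.card_cons, Multiset.card_cons] at e1
          exact Nat.le_of_succ_le_succ e1
        · have hz : (T'.filter fun t => μ ≤ t) = 0 := by
            refine Multiset.filter_eq_nil.mpr (fun a ha hμa => hμ ?_)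
            exact hμa.trans (hmax a (Multiset.mem_of_mem_erase ha))
          simp [hz]
      have hlt : T' < T := by rw [← hTc]; exact Multiset.lt_cons_self _ _
      have hind := ih T' hlt S' h'
      have eT : (T.filter fun t => (0:ℚ) ≤ t).sum = t₀ + (T'.filter fun t => (0:ℚ) ≤ t).sum := by
        rw [← hTc, Multiset.filter_cons_of_pos _ ht₀0, Multiset.sum_cons]
      have eS : (S.filter fun s => (0:ℚ) ≤ s).sum = s₀ + (S'.filter fun s => (0:ℚ) ≤ s).sum := by
        rw [← hSc, Multiset.filter_cons_of_pos _ (ht₀0.trans hs₀t), Multiset.sum_cons]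
      rw [eT, eS]
      exact add_le_add hs₀t hind
    · have hz : (T.filter fun t => (0:ℚ) ≤ t) = 0 :=
        Multiset.filter_eq_nil.mpr (fun a ha h0 => hT ⟨a, ha, h0⟩)
      rw [hz, Multiset.sum_zero]
      exact Multiset.sum_nonneg fun x hx => (Multiset.mem_filter.mp hx).2
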